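/- arXiv:1411.6090 — 2 statements merged into one kernel-verified Lean document; each statement's English description precedes it below -/
import Mathlib

section
/- For every closed subset Y ⊆ X, the relative algebras C*(Y⊂X) and D*(Y⊂X) are closed two-sided ideals of D*(X); in particular C*(Y⊂X) is a closed two-sided ideal of C*(X) and also a closed two-sided ideal of D*(Y⊂X). -/
set_option linter.unusedSectionVars false
set_option maxHeartbeats 1000000


open Metric ZeroAtInfty

variable {X : Type*} [MetricSpace X] [ProperSpace X]
variable {H : Type*} [NormedAddCommGroup H] [InnerProductSpace ℂ H] [CompleteSpace H]

/-- `T` has propagation at most `r` with respect to the representation `ρ`. -/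
def HasPropagationLE (ρ : C₀(X, ℂ) →⋆ₙₐ[ℂ] (H →L[ℂ] H)) (T : H →L[ℂ] H) (r : ℝ) : Prop :=
  ∀ φ ψ : C₀(X, ℂ),
    (∀ x ∈ tsupport ⇑φ, ∀ y ∈ tsupport ⇑ψ, r < dist x y) → ρ φ * T * ρ ψ = 0

/-- `T` is controlled (finite propagation). -/
def Controlled (ρ : C₀(X, ℂ) →⋆ₙₐ[ℂ] (H →L[ℂ] H)) (T : H →L[ℂ] H) : Prop :=
  ∃ r : ℝ, 0 ≤ r ∧ HasPropagationLE ρ T r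

/-- `T` is pseudolocal. -/
def Pseudolocal (ρ : C₀(X, ℂ) →⋆ₙₐ[ℂ] (H →L[ℂ] H)) (T : H →L[ℂ] H) : Prop :=
  ∀ φ ψ : C₀(X, ℂ), φ * ψ = 0 → IsCompactOperator ⇑(ρ φ * T * ρ ψ)

/-- `T` is locally compact. -/
def LocallyCompact (ρ : C₀(X, ℂ) →⋆ₙₐ[ℂ] (H →L[ℂ] H)) (T : H →L[ℂ] H) : Prop :=
  ∀ φ : C₀(X, ℂ), IsCompactOperator ⇑(ρ φ * T) ∧ IsCompactOperator ⇑(T * ρ φ)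

/-- `T` is supported near the closed subset `Y`. -/
def SupportedNear (ρ : C₀(X, ℂ) →⋆ₙₐ[ℂ] (H →L[ℂ] H)) (Y : Set X) (T : H →L[ℂ] H) : Prop :=
  ∃ r : ℝ, 0 ≤ r ∧ ∀ φ : C₀(X, ℂ),
    (∀ x ∈ tsupport ⇑φ, r < infDist x Y) → ρ φ * T = 0 ∧ T * ρ φ = 0

/-- `ρ` is a nondegenerate representation of `C₀(X)`. -/
def Nondegenerate (ρ : C₀(X, ℂ) →⋆ₙₐ[ℂ] (H →L[ℂ] H)) : Prop :=
  Dense (Submodule.span ℂ (⋃ φ : C₀(X, ℂ), Set.range ⇑(ρ φ)) : Set H)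

/-- The Roe algebra `C*(X)`: norm closure of controlled locally compact operators. -/
def RoeAlgebra (ρ : C₀(X, ℂ) →⋆ₙₐ[ℂ] (H →L[ℂ] H)) : Set (H →L[ℂ] H) :=
  closure {T | Controlled ρ T ∧ LocallyCompact ρ T}

/-- The structure algebra `D*(X)`: norm closure of controlled pseudolocal operators. -/
def StructureAlgebra (ρ : C₀(X, ℂ) →⋆ₙₐ[ℂ] (H →L[ℂ] H)) : Set (H →L[ℂ] H) :=
  closure {T | Controlled ρ T ∧ Pseudolocal ρ T}

/-- The relative Roe algebra `C*(Y ⊂ X)`. -/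
def RelRoeAlgebra (ρ : C₀(X, ℂ) →⋆ₙₐ[ℂ] (H →L[ℂ] H)) (Y : Set X) : Set (H →L[ℂ] H) :=
  closure {T | Controlled ρ T ∧ LocallyCompact ρ T ∧ SupportedNear ρ Y T}

/-- The relative structure algebra `D*(Y ⊂ X)`. -/
def RelStructureAlgebra (ρ : C₀(X, ℂ) →⋆ₙₐ[ℂ] (H →L[ℂ] H)) (Y : Set X) : Set (H →L[ℂ] H) :=
  closure {T | Controlled ρ T ∧ Pseudolocal ρ T ∧ SupportedNear ρ Y T}

namespace RoeAux

lemma c0_norm_le {f : C₀(X, ℂ)} {C : ℝ} (hC : 0 ≤ C) (h : ∀ x, ‖f x‖ ≤ C) : ‖f‖ ≤ C := by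
  rw [← ZeroAtInftyContinuousMap.norm_toBCF_eq_norm]
  exact (BoundedContinuousFunction.norm_le hC).mpr h

lemma c0_eq_zero_of_tsupport_empty {f : C₀(X, ℂ)} (h : tsupport ⇑f = ∅) : f = 0 := by
  ext x
  have : x ∉ tsupport ⇑f := by simp [h]
  simpa using image_eq_zero_of_notMem_tsupport this

noncomputable def mkC0 (f : X → ℂ) (hc : Continuous f) (h : HasCompactSupport f) : C₀(X, ℂ) :=
  ⟨⟨f, hc⟩, h.is_zero_at_infty⟩

@[simp] lemma mkC0_coe (f : X → ℂ) (hc : Continuous f) (h : HasCompactSupport f) :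
    ⇑(mkC0 f hc h) = f := rfl

noncomputable def cutoff (s : Set X) (a b : ℝ) : X → ℂ := fun x =>
  ((max 0 (min 1 ((b - infDist x s) / (b - a))) : ℝ) : ℂ)

lemma cutoff_continuous (s : Set X) (a b : ℝ) : Continuous (cutoff s a b) :=
  Complex.continuous_ofReal.comp <| continuous_const.max <| continuous_const.min <|
    (continuous_const.sub (continuous_infDist_pt s)).div_const _

lemma cutoff_eq_one {s : Set X} {a b : ℝ} (hab : a < b) {x : X} (h : infDist x s ≤ a) :
    cutoff s a b x = 1 := by
  have hba : (0:ℝ) < b - a := sub_pos.2 hab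
  have h1 : (1:ℝ) ≤ (b - infDist x s) / (b - a) := by
    rw [le_div_iff₀ hba]
    linarith
  simp [cutoff, min_eq_left h1]

lemma cutoff_eq_zero {s : Set X} {a b : ℝ} (hab : a < b) {x : X} (h : b ≤ infDist x s) :
    cutoff s a b x = 0 := by
  have hba : (0:ℝ) < b - a := sub_pos.2 hab
  have h1 : (b - infDist x s) / (b - a) ≤ 0 :=
    div_nonpos_iff.mpr (Or.inr ⟨by linarith, hba.le⟩)
  have : min 1 ((b - infDist x s) / (b - a)) ≤ 0 := le_trans (min_le_right _ _) h1
  simp [cutoff, max_eq_left this]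

lemma cutoff_mem_Icc (s : Set X) (a b : ℝ) (x : X) :
    ∃ t : ℝ, 0 ≤ t ∧ t ≤ 1 ∧ cutoff s a b x = (t : ℂ) := by
  refine ⟨max 0 (min 1 ((b - infDist x s) / (b - a))), le_max_left _ _, ?_, rfl⟩
  exact max_le zero_le_one (min_le_left _ _)

lemma cutoff_norm_le (s : Set X) (a b : ℝ) (x : X) : ‖cutoff s a b x‖ ≤ 1 := by
  obtain ⟨t, ht0, ht1, hx⟩ := cutoff_mem_Icc s a b x
  rw [hx, Complex.norm_real, Real.norm_eq_abs, abs_of_nonneg ht0]; exact ht1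

lemma cutoff_one_sub_norm_le (s : Set X) (a b : ℝ) (x : X) : ‖1 - cutoff s a b x‖ ≤ 1 := by
  obtain ⟨t, ht0, ht1, hx⟩ := cutoff_mem_Icc s a b x
  rw [hx, show (1 : ℂ) - (t:ℝ) = ((1 - t : ℝ) : ℂ) from by push_cast; ring,
    Complex.norm_real, Real.norm_eq_abs, abs_of_nonneg (by linarith)]
  linarith

lemma cutoff_ne_one {s : Set X} {a b : ℝ} (hab : a < b) {x : X} (h : cutoff s a b x ≠ 1) :
    a < infDist x s := by
  by_contra hc
  exact h (cutoff_eq_one hab (not_lt.mp hc))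

lemma cutoff_tsupport {s : Set X} {a b : ℝ} (hab : a < b) :
    tsupport (cutoff s a b) ⊆ {x | infDist x s ≤ b} := by
  apply closure_minimal
  · intro x hx
    by_contra hc
    simp only [Set.mem_setOf_eq, not_le] at hc
    exact hx (cutoff_eq_zero hab hc.le)
  · exact isClosed_le (continuous_infDist_pt s) continuous_const

lemma isCompact_infDist_le {K : Set X} (hK : IsCompact K) (hne : K.Nonempty) (b : ℝ) :
    IsCompact {x | infDist x K ≤ b} := by
  obtain ⟨x₀, hx₀⟩ := hne
  refine isCompact_of_isClosed_isBounded
    (isClosed_le (continuous_infDist_pt K) continuous_const) ?_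
  refine (isBounded_iff_subset_closedBall x₀).mpr ⟨b + 1 + diam K, fun x hx => ?_⟩
  obtain ⟨k, hk, hdk⟩ := (infDist_lt_iff ⟨x₀, hx₀⟩).mp (lt_of_le_of_lt hx (lt_add_one b))
  have : dist k x₀ ≤ diam K := dist_le_diam_of_mem hK.isBounded hk hx₀
  calc dist x x₀ ≤ dist x k + dist k x₀ := dist_triangle _ _ _
    _ ≤ b + 1 + diam K := by linarith

lemma cutoff_hasCompactSupport {s : Set X} (hs : IsCompact s) (hne : s.Nonempty) {a b : ℝ}
    (hab : a < b) : HasCompactSupport (cutoff s a b) :=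
  HasCompactSupport.of_support_subset_isCompact (isCompact_infDist_le hs hne b)
    (fun x hx => by
      by_contra hc
      simp only [Set.mem_setOf_eq, not_le] at hc
      exact hx (cutoff_eq_zero hab hc.le))

end RoeAux

namespace RoeAux

variable (ρ : C₀(X, ℂ) →⋆ₙₐ[ℂ] (H →L[ℂ] H))

lemma rho_norm_le (f : C₀(X, ℂ)) : ‖ρ f‖ ≤ ‖f‖ :=
  NonUnitalStarAlgHom.norm_apply_le ρ f

lemma compact_mul_right {f : H →L[ℂ] H} (g : H →L[ℂ] H) (h : IsCompactOperator ⇑f) :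
    IsCompactOperator ⇑(f * g) := by
  simpa [Function.comp_def] using h.comp_clm g

lemma compact_mul_left (f : H →L[ℂ] H) {g : H →L[ℂ] H} (h : IsCompactOperator ⇑g) :
    IsCompactOperator ⇑(f * g) := by
  simpa [Function.comp_def] using h.continuous_comp f.continuous

lemma compact_of_approx {A : H →L[ℂ] H}
    (h : ∀ ε > (0:ℝ), ∃ B : H →L[ℂ] H, IsCompactOperator ⇑B ∧ ‖A - B‖ ≤ ε) :
    IsCompactOperator ⇑A := by
  have hA : A ∈ closure {B : H →L[ℂ] H | IsCompactOperator ⇑B} := by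
    rw [Metric.mem_closure_iff]
    intro ε hε
    obtain ⟨B, hB, hAB⟩ := h (ε/2) (by linarith)
    exact ⟨B, hB, by rw [dist_eq_norm]; linarith⟩
  exact isClosed_setOf_isCompactOperator.closure_subset hA

/-- If `B` kills the range of every `ρ e`, then `B = 0`. -/
lemma kill_right (hρ : Nondegenerate ρ) {B : H →L[ℂ] H}
    (h : ∀ e : C₀(X, ℂ), B * ρ e = 0) : B = 0 := by
  have hEq : Set.EqOn ⇑B ⇑(0 : H →L[ℂ] H)
      (Submodule.span ℂ (⋃ φ : C₀(X, ℂ), Set.range ⇑(ρ φ)) : Set H) := by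
    intro v hv
    induction hv using Submodule.span_induction with
    | mem x hx =>
      obtain ⟨s, ⟨e, rfl⟩, hs⟩ := hx
      obtain ⟨y, rfl⟩ := hs
      have := congrArg (fun (f : H →L[ℂ] H) => f y) (h e)
      simpa using this
    | zero => simp
    | add x y _ _ hx hy => simp [map_add, hx, hy]
    | smul a x _ hx => simp [map_smul, hx]
  exact DFunLike.ext _ _ fun x => congrFun (B.continuous.ext_on hρ (map_continuous _) hEq) x

/-- If `ρ e * B = 0` for all `e`, then `B = 0`. -/
lemma kill_left (hρ : Nondegenerate ρ) {B : H →L[ℂ] H}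
    (h : ∀ e : C₀(X, ℂ), ρ e * B = 0) : B = 0 := by
  ext w
  have hw : ∀ e : C₀(X, ℂ), ρ e (B w) = 0 := by
    intro e
    have := congrArg (fun (f : H →L[ℂ] H) => f w) (h e)
    simpa using this
  have : ∀ v : (Submodule.span ℂ (⋃ φ : C₀(X, ℂ), Set.range ⇑(ρ φ))),
      inner ℂ (B w) (v : H) = (0 : ℂ) := by
    rintro ⟨v, hv⟩
    induction hv using Submodule.span_induction with
    | mem x hx =>
      obtain ⟨s, ⟨e, rfl⟩, hs⟩ := hx
      obtain ⟨y, rfl⟩ := hs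
      have hadj : (ρ e).adjoint (B w) = 0 := by
        rw [← ContinuousLinearMap.star_eq_adjoint, ← map_star]
        exact hw (star e)
      calc inner ℂ (B w) (ρ e y) = inner ℂ ((ρ e).adjoint (B w)) y :=
            (ContinuousLinearMap.adjoint_inner_left (ρ e) y (B w)).symm
        _ = (0:ℂ) := by rw [hadj]; simp
    | zero => simp
    | add x y _ _ hx hy => rw [inner_add_right, hx, hy, add_zero]
    | smul a x _ hx => rw [inner_smul_right, hx, mul_zero]
  simpa using Dense.eq_zero_of_inner_left ℂ hρ (fun v hv => this ⟨v, hv⟩)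

end RoeAux

namespace RoeAux

variable (ρ : C₀(X, ℂ) →⋆ₙₐ[ℂ] (H →L[ℂ] H))

lemma approx (φ : C₀(X, ℂ)) {ε : ℝ} (hε : 0 < ε) :
    ∃ φ' : C₀(X, ℂ), HasCompactSupport ⇑φ' ∧ tsupport ⇑φ' ⊆ tsupport ⇑φ ∧ ‖φ - φ'‖ ≤ ε ∧
      ∀ ψ : C₀(X, ℂ), φ * ψ = 0 → φ' * ψ = 0 := by
  classical
  set K := {x : X | ε ≤ ‖φ x‖} with hK
  have hKcl : IsClosed K :=
    isClosed_le continuous_const (continuous_norm.comp (map_continuous φ))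
  have hKc : IsCompact K := by
    have h1 : (⇑φ) ⁻¹' (Metric.ball 0 ε) ∈ Filter.cocompact X :=
      zero_at_infty φ (Metric.ball_mem_nhds 0 hε)
    obtain ⟨t, htc, hts⟩ := Filter.mem_cocompact.mp h1
    refine htc.of_isClosed_subset hKcl ?_
    intro x hx
    by_contra hxt
    have : ‖φ x‖ < ε := by simpa [Metric.mem_ball, dist_zero_right] using hts hxt
    exact absurd (hx : ε ≤ ‖φ x‖) (not_le.mpr this)
  by_cases hKe : K = ∅
  · refine ⟨0, ?_, ?_, ?_, by simp⟩
    · have : ⇑(0 : C₀(X, ℂ)) = (0 : X → ℂ) := rfl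
      rw [HasCompactSupport, this]
      simp [tsupport]
    · rw [show ⇑(0 : C₀(X, ℂ)) = (0 : X → ℂ) from rfl]
      simp [tsupport]
    · rw [sub_zero]
      refine c0_norm_le hε.le fun x => ?_
      by_contra hc
      exact (Set.eq_empty_iff_forall_notMem.mp hKe x) (le_of_not_gt (fun h => hc h.le))
  · have hne : K.Nonempty := Set.nonempty_iff_ne_empty.mpr hKe
    have h01 : (0:ℝ) < 1 := zero_lt_one
    let u : C₀(X, ℂ) := mkC0 (cutoff K 0 1) (cutoff_continuous _ _ _)
      (cutoff_hasCompactSupport hKc hne h01)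
    have hucoe : ⇑u = cutoff K 0 1 := rfl
    refine ⟨φ * u, ?_, ?_, ?_, ?_⟩
    · have : ⇑(φ * u) = ⇑φ * ⇑u := rfl
      rw [HasCompactSupport, this]
      exact (HasCompactSupport.mul_left (cutoff_hasCompactSupport hKc hne h01) : _)
    · refine closure_mono ?_
      intro x hx
      have : (φ * u) x = φ x * u x := rfl
      intro hx0
      exact hx (by simp [Function.mem_support, this, hx0] at hx ⊢)
    · refine c0_norm_le hε.le fun x => ?_
      have hval : (φ - φ * u) x = φ x * (1 - u x) := by
        simp [mul_comm]; ring
      rw [hval]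
      by_cases hxK : x ∈ K
      · have : u x = 1 := by
          rw [hucoe]
          exact cutoff_eq_one h01 (le_of_eq (infDist_zero_of_mem hxK))
        simp [this, hε.le]
      · have h1 : ‖φ x‖ ≤ ε := le_of_not_ge (fun h => hxK h)
        calc ‖φ x * (1 - u x)‖ = ‖φ x‖ * ‖1 - u x‖ := norm_mul _ _
          _ ≤ ε * 1 := by
              apply mul_le_mul h1 ?_ (norm_nonneg _) hε.le
              rw [hucoe]; exact cutoff_one_sub_norm_le K 0 1 x
          _ = ε := mul_one ε
    · intro ψ hψ
      have : φ * u * ψ = φ * ψ * u := mul_right_comm φ u ψ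
      rw [this, hψ, zero_mul]

end RoeAux

namespace RoeAux

variable (ρ : C₀(X, ℂ) →⋆ₙₐ[ℂ] (H →L[ℂ] H))

lemma reduce_right (M : H →L[ℂ] H) (φ : C₀(X, ℂ))
    (h : ∀ φ' : C₀(X, ℂ), HasCompactSupport ⇑φ' → tsupport ⇑φ' ⊆ tsupport ⇑φ →
      (∀ ψ : C₀(X, ℂ), φ * ψ = 0 → φ' * ψ = 0) → ρ φ' * M = 0) :
    ρ φ * M = 0 := by
  rw [← norm_le_zero_iff]
  refine le_of_forall_pos_le_add fun ε hε => ?_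
  have hδ : (0:ℝ) < ε / (‖M‖ + 1) := by positivity
  obtain ⟨φ', hc, hsupp, hnorm, hmul⟩ := approx φ hδ
  have h0 := h φ' hc hsupp hmul
  have heq : ρ φ * M = ρ (φ - φ') * M := by rw [map_sub, sub_mul, h0, sub_zero]
  rw [heq, zero_add]
  calc ‖ρ (φ - φ') * M‖ ≤ ‖ρ (φ - φ')‖ * ‖M‖ := norm_mul_le _ _
    _ ≤ (ε / (‖M‖ + 1)) * (‖M‖ + 1) := by
        apply mul_le_mul ((rho_norm_le ρ _).trans hnorm) (by linarith) (norm_nonneg _) hδ.le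
    _ = ε := div_mul_cancel₀ ε (by positivity)

lemma reduce_left (M : H →L[ℂ] H) (φ : C₀(X, ℂ))
    (h : ∀ φ' : C₀(X, ℂ), HasCompactSupport ⇑φ' → tsupport ⇑φ' ⊆ tsupport ⇑φ →
      (∀ ψ : C₀(X, ℂ), φ * ψ = 0 → φ' * ψ = 0) → M * ρ φ' = 0) :
    M * ρ φ = 0 := by
  rw [← norm_le_zero_iff]
  refine le_of_forall_pos_le_add fun ε hε => ?_
  have hδ : (0:ℝ) < ε / (‖M‖ + 1) := by positivity
  obtain ⟨φ', hc, hsupp, hnorm, hmul⟩ := approx φ hδ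
  have h0 := h φ' hc hsupp hmul
  have heq : M * ρ φ = M * ρ (φ - φ') := by rw [map_sub, mul_sub, h0, sub_zero]
  rw [heq, zero_add]
  calc ‖M * ρ (φ - φ')‖ ≤ ‖M‖ * ‖ρ (φ - φ')‖ := norm_mul_le _ _
    _ ≤ (‖M‖ + 1) * (ε / (‖M‖ + 1)) := by
        apply mul_le_mul (by linarith) ((rho_norm_le ρ _).trans hnorm) (norm_nonneg _)
          (by positivity)
    _ = ε := by rw [mul_comm]; exact div_mul_cancel₀ ε (by positivity)

lemma reduce_right_isCompact (M : H →L[ℂ] H) (φ : C₀(X, ℂ))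
    (h : ∀ φ' : C₀(X, ℂ), HasCompactSupport ⇑φ' → tsupport ⇑φ' ⊆ tsupport ⇑φ →
      (∀ ψ : C₀(X, ℂ), φ * ψ = 0 → φ' * ψ = 0) → IsCompactOperator ⇑(ρ φ' * M)) :
    IsCompactOperator ⇑(ρ φ * M) := by
  apply compact_of_approx
  intro ε hε
  have hδ : (0:ℝ) < ε / (‖M‖ + 1) := by positivity
  obtain ⟨φ', hc, hsupp, hnorm, hmul⟩ := approx φ hδ
  refine ⟨ρ φ' * M, h φ' hc hsupp hmul, ?_⟩
  have heq : ρ φ * M - ρ φ' * M = ρ (φ - φ') * M := by rw [map_sub, sub_mul]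
  rw [heq]
  calc ‖ρ (φ - φ') * M‖ ≤ ‖ρ (φ - φ')‖ * ‖M‖ := norm_mul_le _ _
    _ ≤ (ε / (‖M‖ + 1)) * (‖M‖ + 1) := by
        apply mul_le_mul ((rho_norm_le ρ _).trans hnorm) (by linarith) (norm_nonneg _) hδ.le
    _ = ε := div_mul_cancel₀ ε (by positivity)

lemma reduce_left_isCompact (M : H →L[ℂ] H) (φ : C₀(X, ℂ))
    (h : ∀ φ' : C₀(X, ℂ), HasCompactSupport ⇑φ' → tsupport ⇑φ' ⊆ tsupport ⇑φ →
      (∀ ψ : C₀(X, ℂ), φ * ψ = 0 → φ' * ψ = 0) → IsCompactOperator ⇑(M * ρ φ')) :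
    IsCompactOperator ⇑(M * ρ φ) := by
  apply compact_of_approx
  intro ε hε
  have hδ : (0:ℝ) < ε / (‖M‖ + 1) := by positivity
  obtain ⟨φ', hc, hsupp, hnorm, hmul⟩ := approx φ hδ
  refine ⟨M * ρ φ', h φ' hc hsupp hmul, ?_⟩
  have heq : M * ρ φ - M * ρ φ' = M * ρ (φ - φ') := by rw [map_sub, mul_sub]
  rw [heq]
  calc ‖M * ρ (φ - φ')‖ ≤ ‖M‖ * ‖ρ (φ - φ')‖ := norm_mul_le _ _
    _ ≤ (‖M‖ + 1) * (ε / (‖M‖ + 1)) := by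
        apply mul_le_mul (by linarith) ((rho_norm_le ρ _).trans hnorm) (norm_nonneg _)
          (by positivity)
    _ = ε := by rw [mul_comm]; exact div_mul_cancel₀ ε (by positivity)

/-- The cutting lemma: a finite-propagation operator localized near a compactly supported
function can be cut off by a compactly supported bump function. -/
lemma cut (hρ : Nondegenerate ρ) {T : H →L[ℂ] H} {r : ℝ} (hT : HasPropagationLE ρ T r)
    (φ : C₀(X, ℂ)) (hφ : HasCompactSupport ⇑φ) :
    ∃ u : C₀(X, ℂ), HasCompactSupport ⇑u ∧
      tsupport ⇑u ⊆ {x | infDist x (tsupport ⇑φ) ≤ r + 2} ∧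
      ρ φ * T = ρ φ * T * ρ u ∧ T * ρ φ = ρ u * (T * ρ φ) := by
  by_cases hts : tsupport ⇑φ = ∅
  · have hφ0 : φ = 0 := c0_eq_zero_of_tsupport_empty hts
    refine ⟨0, ?_, ?_, ?_, ?_⟩
    · rw [HasCompactSupport, show ⇑(0 : C₀(X, ℂ)) = (0 : X → ℂ) from rfl]
      simp [tsupport]
    · rw [show ⇑(0 : C₀(X, ℂ)) = (0 : X → ℂ) from rfl]
      simp [tsupport]
    · rw [hφ0, map_zero, zero_mul, zero_mul]
    · rw [hφ0, map_zero, mul_zero, zero_mul]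
  · have hne : (tsupport ⇑φ).Nonempty := Set.nonempty_iff_ne_empty.mpr hts
    set K := tsupport ⇑φ with hKdef
    have hab : r + 1 < r + 2 := by linarith
    let u : C₀(X, ℂ) := mkC0 (cutoff K (r+1) (r+2)) (cutoff_continuous _ _ _)
      (cutoff_hasCompactSupport hφ hne hab)
    have hucoe : ⇑u = cutoff K (r+1) (r+2) := rfl
    have husupp : tsupport ⇑u ⊆ {x | infDist x K ≤ r + 2} := by
      rw [hucoe]; exact cutoff_tsupport hab
    -- key support estimate for functions vanishing where `u = 1`
    have hfar : ∀ (g : X → ℂ), (∀ z, cutoff K (r+1) (r+2) z = 1 → g z = 0) →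
        ∀ y ∈ tsupport g, ∀ x ∈ K, r < dist x y := by
      intro g hg y hy x hx
      have hsub : tsupport g ⊆ {z | r + 1 ≤ infDist z K} := by
        apply closure_minimal
        · intro z hz
          have hz1 : cutoff K (r+1) (r+2) z ≠ 1 := fun h1 => hz (hg z h1)
          exact (cutoff_ne_one hab hz1).le
        · exact isClosed_le continuous_const (continuous_infDist_pt K)
      have hy' : r + 1 ≤ infDist y K := hsub hy
      have h2 : infDist y K ≤ dist y x := infDist_le_dist_of_mem hx
      calc r < r + 1 := lt_add_one r
        _ ≤ infDist y K := hy'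
        _ ≤ dist y x := h2
        _ = dist x y := dist_comm y x
    refine ⟨u, cutoff_hasCompactSupport hφ hne hab, husupp, ?_, ?_⟩
    · have hBr : ρ φ * T - ρ φ * T * ρ u = 0 := by
        apply kill_right ρ hρ
        intro e
        have hvan : ∀ z, cutoff K (r+1) (r+2) z = 1 → (⇑(e - u * e)) z = 0 := by
          intro z h1
          have hz : (e - u * e) z = e z - u z * e z := by simp
          have hu1 : u z = 1 := h1
          rw [hz, hu1, one_mul, sub_self]
        have hsupp := hfar _ hvan
        have he : ρ φ * T * ρ (e - u * e) = 0 :=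
          hT φ (e - u * e) (fun x hx y hy => hsupp y hy x hx)
        have hcalc : (ρ φ * T - ρ φ * T * ρ u) * ρ e = ρ φ * T * ρ (e - u * e) := by
          simp only [map_sub, map_mul, mul_sub, sub_mul, mul_assoc]
        rw [hcalc, he]
      exact sub_eq_zero.mp hBr
    · have hBl : T * ρ φ - ρ u * (T * ρ φ) = 0 := by
        apply kill_left ρ hρ
        intro e
        have hvan : ∀ z, cutoff K (r+1) (r+2) z = 1 → (⇑(e - e * u)) z = 0 := by
          intro z h1
          have hz : (e - e * u) z = e z - e z * u z := by simp
          have hu1 : u z = 1 := h1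
          rw [hz, hu1, mul_one, sub_self]
        have hsupp := hfar _ hvan
        have he : ρ (e - e * u) * T * ρ φ = 0 :=
          hT (e - e * u) φ (fun x hx y hy => by
            rw [dist_comm]; exact hsupp x hx y hy)
        have he' : ρ (e - e * u) * (T * ρ φ) = 0 := by rw [← mul_assoc]; exact he
        have hcalc : ρ e * (T * ρ φ - ρ u * (T * ρ φ)) = ρ (e - e * u) * (T * ρ φ) := by
          simp only [map_sub, map_mul, mul_sub, sub_mul, mul_assoc]
        rw [hcalc, he']
      exact (sub_eq_zero.mp hBl)

end RoeAux

namespace RoeAux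

variable (ρ : C₀(X, ℂ) →⋆ₙₐ[ℂ] (H →L[ℂ] H))

lemma locallyCompact_pseudolocal {T : H →L[ℂ] H} (h : LocallyCompact ρ T) :
    Pseudolocal ρ T :=
  fun φ ψ _ => compact_mul_right (ρ ψ) ((h φ).1)

lemma mul_controlled (hρ : Nondegenerate ρ) {T S : H →L[ℂ] H}
    (hT : Controlled ρ T) (hS : Controlled ρ S) : Controlled ρ (T * S) := by
  obtain ⟨rT, hrT, hTp⟩ := hT
  obtain ⟨rS, hrS, hSp⟩ := hS
  refine ⟨rT + rS + 3, by linarith, ?_⟩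
  intro φ ψ hdist
  have hgoal : ρ φ * (T * S) * ρ ψ = ρ φ * (T * (S * ρ ψ)) := by simp only [mul_assoc]
  rw [hgoal]
  apply reduce_right ρ (T * (S * ρ ψ)) φ
  intro φ' hc hsupp _
  by_cases hts : tsupport ⇑φ' = ∅
  · rw [c0_eq_zero_of_tsupport_empty hts, map_zero, zero_mul]
  · have hne : (tsupport ⇑φ').Nonempty := Set.nonempty_iff_ne_empty.mpr hts
    obtain ⟨u, huc, husupp, hcutR, _⟩ := cut ρ hρ hTp φ' hc
    have h0 : ρ u * S * ρ ψ = 0 := by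
      apply hSp
      intro x hx y hy
      have hxd : infDist x (tsupport ⇑φ') ≤ rT + 2 := husupp hx
      obtain ⟨x', hx', hdx⟩ := (infDist_lt_iff hne).mp
        (lt_of_le_of_lt hxd (by linarith : rT + 2 < rT + 3))
      have hfar := hdist x' (hsupp hx') y hy
      have htri : dist x' y ≤ dist x' x + dist x y := dist_triangle _ _ _
      have hcomm : dist x' x = dist x x' := dist_comm _ _
      linarith
    have h0' : ρ u * (S * ρ ψ) = 0 := by rw [← mul_assoc]; exact h0
    calc ρ φ' * (T * (S * ρ ψ)) = ρ φ' * T * (S * ρ ψ) := (mul_assoc _ _ _).symm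
      _ = ρ φ' * T * ρ u * (S * ρ ψ) := by conv_lhs => rw [hcutR]
      _ = ρ φ' * T * (ρ u * (S * ρ ψ)) := mul_assoc _ _ _
      _ = 0 := by rw [h0', mul_zero]

lemma mul_supportedNear_left (hρ : Nondegenerate ρ) {Y : Set X} {T S : H →L[ℂ] H}
    (hT : Controlled ρ T) (hS : SupportedNear ρ Y S) : SupportedNear ρ Y (T * S) := by
  obtain ⟨rT, hrT, hTp⟩ := hT
  obtain ⟨rS, hrS, hSn⟩ := hS
  refine ⟨rS + rT + 3, by linarith, ?_⟩
  intro φ hφ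
  constructor
  · apply reduce_right ρ (T * S) φ
    intro φ' hc hsupp _
    by_cases hts : tsupport ⇑φ' = ∅
    · rw [c0_eq_zero_of_tsupport_empty hts, map_zero, zero_mul]
    · have hne : (tsupport ⇑φ').Nonempty := Set.nonempty_iff_ne_empty.mpr hts
      obtain ⟨u, huc, husupp, hcutR, _⟩ := cut ρ hρ hTp φ' hc
      have h0 : ρ u * S = 0 := by
        refine (hSn u ?_).1
        intro x hx
        have hxd : infDist x (tsupport ⇑φ') ≤ rT + 2 := husupp hx
        obtain ⟨x', hx', hdx⟩ := (infDist_lt_iff hne).mp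
          (lt_of_le_of_lt hxd (by linarith : rT + 2 < rT + 3))
        have h1 : rS + rT + 3 < infDist x' Y := hφ x' (hsupp hx')
        have h2 : infDist x' Y ≤ infDist x Y + dist x' x := infDist_le_infDist_add_dist
        have h3 : dist x' x = dist x x' := dist_comm _ _
        linarith
      calc ρ φ' * (T * S) = ρ φ' * T * S := (mul_assoc _ _ _).symm
        _ = ρ φ' * T * (ρ u * S) := by conv_lhs => rw [hcutR, mul_assoc]
        _ = 0 := by rw [h0, mul_zero]
  · have h0 : S * ρ φ = 0 :=
      (hSn φ (fun x hx => lt_of_le_of_lt (by linarith) (hφ x hx))).2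
    rw [mul_assoc, h0, mul_zero]

lemma mul_supportedNear_right (hρ : Nondegenerate ρ) {Y : Set X} {T S : H →L[ℂ] H}
    (hT : Controlled ρ T) (hS : SupportedNear ρ Y S) : SupportedNear ρ Y (S * T) := by
  obtain ⟨rT, hrT, hTp⟩ := hT
  obtain ⟨rS, hrS, hSn⟩ := hS
  refine ⟨rS + rT + 3, by linarith, ?_⟩
  intro φ hφ
  constructor
  · have h0 : ρ φ * S = 0 :=
      (hSn φ (fun x hx => lt_of_le_of_lt (by linarith) (hφ x hx))).1
    rw [← mul_assoc, h0, zero_mul]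
  · apply reduce_left ρ (S * T) φ
    intro φ' hc hsupp _
    by_cases hts : tsupport ⇑φ' = ∅
    · rw [c0_eq_zero_of_tsupport_empty hts, map_zero, mul_zero]
    · have hne : (tsupport ⇑φ').Nonempty := Set.nonempty_iff_ne_empty.mpr hts
      obtain ⟨u, huc, husupp, _, hcutL⟩ := cut ρ hρ hTp φ' hc
      have h0 : S * ρ u = 0 := by
        refine (hSn u ?_).2
        intro x hx
        have hxd : infDist x (tsupport ⇑φ') ≤ rT + 2 := husupp hx
        obtain ⟨x', hx', hdx⟩ := (infDist_lt_iff hne).mp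
          (lt_of_le_of_lt hxd (by linarith : rT + 2 < rT + 3))
        have h1 : rS + rT + 3 < infDist x' Y := hφ x' (hsupp hx')
        have h2 : infDist x' Y ≤ infDist x Y + dist x' x := infDist_le_infDist_add_dist
        have h3 : dist x' x = dist x x' := dist_comm _ _
        linarith
      calc S * T * ρ φ' = S * (T * ρ φ') := mul_assoc _ _ _
        _ = S * (ρ u * (T * ρ φ')) := by conv_lhs => rw [hcutL]
        _ = S * ρ u * (T * ρ φ') := (mul_assoc _ _ _).symm
        _ = 0 := by rw [h0, zero_mul]

lemma mul_locallyCompact_left (hρ : Nondegenerate ρ) {T S : H →L[ℂ] H}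
    (hT : Controlled ρ T) (hS : LocallyCompact ρ S) : LocallyCompact ρ (T * S) := by
  obtain ⟨rT, hrT, hTp⟩ := hT
  intro φ
  constructor
  · apply reduce_right_isCompact ρ (T * S) φ
    intro φ' hc hsupp _
    obtain ⟨u, huc, husupp, hcutR, _⟩ := cut ρ hρ hTp φ' hc
    have heq : ρ φ' * (T * S) = ρ φ' * T * (ρ u * S) := by
      conv_lhs => rw [← mul_assoc, hcutR, mul_assoc]
    rw [heq]
    exact compact_mul_left _ ((hS u).1)
  · rw [mul_assoc]
    exact compact_mul_left _ ((hS φ).2)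

lemma mul_locallyCompact_right (hρ : Nondegenerate ρ) {T S : H →L[ℂ] H}
    (hT : Controlled ρ T) (hS : LocallyCompact ρ S) : LocallyCompact ρ (S * T) := by
  obtain ⟨rT, hrT, hTp⟩ := hT
  intro φ
  constructor
  · rw [← mul_assoc]
    exact compact_mul_right _ ((hS φ).1)
  · apply reduce_left_isCompact ρ (S * T) φ
    intro φ' hc hsupp _
    obtain ⟨u, huc, husupp, _, hcutL⟩ := cut ρ hρ hTp φ' hc
    have heq : S * T * ρ φ' = S * ρ u * (T * ρ φ') := by
      conv_lhs => rw [mul_assoc, hcutL, ← mul_assoc]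
    rw [heq]
    exact compact_mul_right _ ((hS u).2)

end RoeAux

namespace RoeAux

variable (ρ : C₀(X, ℂ) →⋆ₙₐ[ℂ] (H →L[ℂ] H))

lemma sup_small {φ ψ : C₀(X, ℂ)} (hzero : φ * ψ = 0) (hφc : HasCompactSupport ⇑φ)
    (hψ : (tsupport ⇑ψ).Nonempty) {ε : ℝ} (hε : 0 < ε) :
    ∃ δ > (0:ℝ), ∀ x, infDist x (tsupport ⇑ψ) ≤ δ → ‖φ x‖ ≤ ε := by
  by_contra hcon
  push_neg at hcon
  set K := tsupport ⇑ψ with hKdef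
  have hsel : ∀ n : ℕ, ∃ z, infDist z K ≤ 1/(n+1) ∧ ε < ‖φ z‖ := by
    intro n
    obtain ⟨z, hz1, hz2⟩ := hcon (1/(n+1)) (by positivity)
    exact ⟨z, hz1, hz2⟩
  choose x hx1 hx2 using hsel
  have hmem : ∀ n, x n ∈ tsupport ⇑φ := by
    intro n
    apply subset_closure
    rw [Function.mem_support]
    intro h0
    have := hx2 n
    rw [h0] at this
    simp at this
    linarith
  obtain ⟨a, haφ, σ, hσ, hconv⟩ := hφc.tendsto_subseq hmem
  have hbound : ∀ n : ℕ, infDist (x (σ n)) K ≤ 1/(n+1) := by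
    intro n
    refine le_trans (hx1 (σ n)) ?_
    have h1 : (n:ℝ) + 1 ≤ (σ n : ℝ) + 1 := by
      have h2 : n ≤ σ n := hσ.le_apply
      have h3 : (n:ℝ) ≤ (σ n : ℝ) := by exact_mod_cast h2
      linarith
    exact one_div_le_one_div_of_le (by positivity) h1
  have hd0 : Filter.Tendsto (fun n => infDist (x (σ n)) K) Filter.atTop (nhds 0) :=
    squeeze_zero (fun n => infDist_nonneg) hbound tendsto_one_div_add_atTop_nhds_zero_nat
  have hd1 : Filter.Tendsto (fun n => infDist (x (σ n)) K) Filter.atTop (nhds (infDist a K)) :=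
    ((continuous_infDist_pt K).tendsto a).comp hconv
  have hK0 : infDist a K = 0 := tendsto_nhds_unique hd1 hd0
  have haK : a ∈ K := ((isClosed_tsupport _).mem_iff_infDist_zero hψ).mpr hK0
  have hφK0 : ∀ z ∈ K, φ z = 0 := by
    have hcl : IsClosed {z : X | φ z = 0} := isClosed_eq (map_continuous φ) continuous_const
    have hsup : Function.support ⇑ψ ⊆ {z : X | φ z = 0} := by
      intro z hz
      have hz0 : φ z * ψ z = 0 := by
        have := congrArg (fun f : C₀(X, ℂ) => f z) hzero
        simpa using this
      rcases mul_eq_zero.mp hz0 with h | h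
      · exact h
      · exact absurd h hz
    exact fun z hz => closure_minimal hsup hcl hz
  have hφa : φ a = 0 := hφK0 a haK
  have hlim : Filter.Tendsto (fun n => ‖φ (x (σ n))‖) Filter.atTop (nhds ‖φ a‖) :=
    ((continuous_norm.comp (map_continuous φ)).tendsto a).comp hconv
  have hge : ε ≤ ‖φ a‖ :=
    ge_of_tendsto hlim (Filter.Eventually.of_forall fun n => (hx2 (σ n)).le)
  rw [hφa] at hge
  simp at hge
  linarith

lemma mul_pseudolocal (hρ : Nondegenerate ρ) {T S : H →L[ℂ] H} (hTc : Controlled ρ T)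
    (hTp : Pseudolocal ρ T) (hSp : Pseudolocal ρ S) : Pseudolocal ρ (T * S) := by
  obtain ⟨rT, hrT, hTprop⟩ := hTc
  intro φ ψ hzero
  have hgoal : ρ φ * (T * S) * ρ ψ = ρ φ * (T * (S * ρ ψ)) := by simp only [mul_assoc]
  rw [hgoal]
  apply reduce_right_isCompact ρ (T * (S * ρ ψ)) φ
  intro φ' hc hsupp hmul
  have hz' : φ' * ψ = 0 := hmul ψ hzero
  by_cases hψK : tsupport ⇑ψ = ∅
  · have h0 : ρ φ' * (T * (S * ρ ψ)) = 0 := by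
      rw [c0_eq_zero_of_tsupport_empty hψK, map_zero, mul_zero, mul_zero, mul_zero]
    rw [h0]
    simpa using (isCompactOperator_zero : IsCompactOperator (0 : H → H))
  · have hψne : (tsupport ⇑ψ).Nonempty := Set.nonempty_iff_ne_empty.mpr hψK
    set K := tsupport ⇑ψ with hKdef
    set M := T * (S * ρ ψ) with hM
    apply compact_of_approx
    intro ε hε
    have hδpos : (0:ℝ) < ε / (‖M‖ + 1) := by positivity
    obtain ⟨δ, hδ, hsmall⟩ := sup_small hz' hc hψne hδpos
    have hab1 : δ/2 < δ := by linarith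
    have hab2 : δ/8 < δ/4 := by linarith
    set g : X → ℂ := cutoff K (δ/2) δ with hgdef
    set φ₁ : C₀(X, ℂ) := mkC0 (⇑φ' * g)
      ((map_continuous φ').mul (cutoff_continuous _ _ _)) (hc.mul_right) with hφ₁def
    set φ₂ : C₀(X, ℂ) := φ' - φ₁ with hφ₂def
    have hφ₁coe : ∀ z, φ₁ z = φ' z * g z := fun z => rfl
    have hφ₂coe : ∀ z, φ₂ z = φ' z * (1 - g z) := by
      intro z
      have h1 : φ₂ z = φ' z - φ₁ z := rfl
      rw [h1, hφ₁coe z]; ring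
    have hφ₂supp : Function.support ⇑φ₂ ⊆ tsupport ⇑φ' := by
      intro z hz
      apply subset_closure
      rw [Function.mem_support] at hz ⊢
      intro h0
      rw [hφ₂coe z, h0, zero_mul] at hz
      exact hz rfl
    have hφ₂c : HasCompactSupport ⇑φ₂ :=
      IsCompact.of_isClosed_subset hc (isClosed_tsupport _) (closure_minimal hφ₂supp
        (isClosed_tsupport _))
    have hφ₁norm : ‖φ₁‖ ≤ ε / (‖M‖ + 1) := by
      refine c0_norm_le hδpos.le fun z => ?_
      rw [hφ₁coe z]
      by_cases hzK : infDist z K ≤ δ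
      · calc ‖φ' z * g z‖ = ‖φ' z‖ * ‖g z‖ := norm_mul _ _
          _ ≤ (ε/(‖M‖+1)) * 1 :=
              mul_le_mul (hsmall z hzK) (cutoff_norm_le _ _ _ _) (norm_nonneg _) hδpos.le
          _ = ε/(‖M‖+1) := mul_one _
      · have hg0 : g z = 0 := cutoff_eq_zero hab1 (not_le.mp hzK).le
        rw [hg0, mul_zero]
        simp [hδpos.le]
    have hcompact : IsCompactOperator ⇑(ρ φ₂ * M) := by
      obtain ⟨u, huc, husupp, hcutR, _⟩ := cut ρ hρ hTprop φ₂ hφ₂c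
      set g' : X → ℂ := cutoff K (δ/8) (δ/4) with hg'def
      set u₁ : C₀(X, ℂ) := mkC0 (⇑u * g')
        ((map_continuous u).mul (cutoff_continuous _ _ _)) (huc.mul_right) with hu₁def
      set u₂ : C₀(X, ℂ) := u - u₁ with hu₂def
      have hu₁coe : ∀ z, u₁ z = u z * g' z := fun z => rfl
      have hu₂coe : ∀ z, u₂ z = u z * (1 - g' z) := by
        intro z
        have h1 : u₂ z = u z - u₁ z := rfl
        rw [h1, hu₁coe z]; ring
      have hz1 : φ₂ * u₁ = 0 := by
        ext z
        have hv : (φ₂ * u₁) z = φ₂ z * u₁ z := rfl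
        rw [hv, hu₁coe z]
        by_cases hg : g' z = 0
        · rw [hg, mul_zero, mul_zero]
          rfl
        · have h4 : infDist z K < δ/4 := by
            by_contra hcge
            exact hg (cutoff_eq_zero hab2 (not_lt.mp hcge))
          have hgz1 : g z = 1 := cutoff_eq_one hab1 (by linarith)
          rw [hφ₂coe z, hgz1]
          simp
      have hz2 : u₂ * ψ = 0 := by
        ext z
        have hv : (u₂ * ψ) z = u₂ z * ψ z := rfl
        rw [hv, hu₂coe z]
        by_cases hψz : ψ z = 0
        · rw [hψz, mul_zero]
          rfl
        · have hzsup : z ∈ K := subset_closure (Function.mem_support.mpr hψz)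
          have hg'1 : g' z = 1 := cutoff_eq_one hab2
            (by rw [infDist_zero_of_mem hzsup]; linarith)
          rw [hg'1]
          simp
      have hu12 : u₁ + u₂ = u := by rw [hu₂def]; abel
      have hA : ρ φ₂ * M = (ρ φ₂ * T * ρ u₁) * (S * ρ ψ) + (ρ φ₂ * T) * (ρ u₂ * S * ρ ψ) := by
        calc ρ φ₂ * M = ρ φ₂ * T * (S * ρ ψ) := by rw [hM, ← mul_assoc]
          _ = ρ φ₂ * T * ρ u * (S * ρ ψ) := by conv_lhs => rw [hcutR]
          _ = ρ φ₂ * T * (ρ u₁ + ρ u₂) * (S * ρ ψ) := by rw [← map_add, hu12]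
          _ = (ρ φ₂ * T * ρ u₁) * (S * ρ ψ) + (ρ φ₂ * T) * (ρ u₂ * S * ρ ψ) := by
              simp only [mul_add, add_mul, mul_assoc]
      rw [hA]
      apply IsCompactOperator.add
      · exact compact_mul_right _ (hTp φ₂ u₁ hz1)
      · exact compact_mul_left _ (hSp u₂ ψ hz2)
    refine ⟨ρ φ₂ * M, hcompact, ?_⟩
    have hdiff : ρ φ' * M - ρ φ₂ * M = ρ φ₁ * M := by
      rw [← sub_mul, ← map_sub, hφ₂def, sub_sub_cancel]
    rw [hdiff]
    calc ‖ρ φ₁ * M‖ ≤ ‖ρ φ₁‖ * ‖M‖ := norm_mul_le _ _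
      _ ≤ (ε/(‖M‖+1)) * (‖M‖+1) := by
          apply mul_le_mul ((rho_norm_le ρ _).trans hφ₁norm) (by linarith) (norm_nonneg _)
            hδpos.le
      _ = ε := div_mul_cancel₀ ε (by positivity)

end RoeAux


theorem relative_algebras_are_ideals
    (ρ : C₀(X, ℂ) →⋆ₙₐ[ℂ] (H →L[ℂ] H)) (hρ : Nondegenerate ρ)
    (Y : Set X) (hY : IsClosed Y) :
    -- C*(Y⊂X) is a closed two-sided ideal of D*(X):
    IsClosed (RelRoeAlgebra ρ Y) ∧
    RelRoeAlgebra ρ Y ⊆ StructureAlgebra ρ ∧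
    (∀ T ∈ StructureAlgebra ρ, ∀ S ∈ RelRoeAlgebra ρ Y,
      T * S ∈ RelRoeAlgebra ρ Y ∧ S * T ∈ RelRoeAlgebra ρ Y) ∧
    -- D*(Y⊂X) is a closed two-sided ideal of D*(X):
    IsClosed (RelStructureAlgebra ρ Y) ∧
    RelStructureAlgebra ρ Y ⊆ StructureAlgebra ρ ∧
    (∀ T ∈ StructureAlgebra ρ, ∀ S ∈ RelStructureAlgebra ρ Y,
      T * S ∈ RelStructureAlgebra ρ Y ∧ S * T ∈ RelStructureAlgebra ρ Y) ∧
    -- in particular, C*(Y⊂X) is a closed two-sided ideal of C*(X):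
    RelRoeAlgebra ρ Y ⊆ RoeAlgebra ρ ∧
    (∀ T ∈ RoeAlgebra ρ, ∀ S ∈ RelRoeAlgebra ρ Y,
      T * S ∈ RelRoeAlgebra ρ Y ∧ S * T ∈ RelRoeAlgebra ρ Y) ∧
    -- and also a closed two-sided ideal of D*(Y⊂X):
    RelRoeAlgebra ρ Y ⊆ RelStructureAlgebra ρ Y ∧
    (∀ T ∈ RelStructureAlgebra ρ Y, ∀ S ∈ RelRoeAlgebra ρ Y,
      T * S ∈ RelRoeAlgebra ρ Y ∧ S * T ∈ RelRoeAlgebra ρ Y) := by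
  have hg1 : ∀ a ∈ {T : H →L[ℂ] H | Controlled ρ T ∧ Pseudolocal ρ T},
      ∀ b ∈ {T : H →L[ℂ] H | Controlled ρ T ∧ LocallyCompact ρ T ∧ SupportedNear ρ Y T},
      a * b ∈ {T : H →L[ℂ] H | Controlled ρ T ∧ LocallyCompact ρ T ∧ SupportedNear ρ Y T} :=
    fun a ha b hb => ⟨RoeAux.mul_controlled ρ hρ ha.1 hb.1,
      RoeAux.mul_locallyCompact_left ρ hρ ha.1 hb.2.1,
      RoeAux.mul_supportedNear_left ρ hρ ha.1 hb.2.2⟩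
  have hg2 : ∀ a ∈ {T : H →L[ℂ] H | Controlled ρ T ∧ Pseudolocal ρ T},
      ∀ b ∈ {T : H →L[ℂ] H | Controlled ρ T ∧ LocallyCompact ρ T ∧ SupportedNear ρ Y T},
      b * a ∈ {T : H →L[ℂ] H | Controlled ρ T ∧ LocallyCompact ρ T ∧ SupportedNear ρ Y T} :=
    fun a ha b hb => ⟨RoeAux.mul_controlled ρ hρ hb.1 ha.1,
      RoeAux.mul_locallyCompact_right ρ hρ ha.1 hb.2.1,
      RoeAux.mul_supportedNear_right ρ hρ ha.1 hb.2.2⟩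
  have hg3 : ∀ a ∈ {T : H →L[ℂ] H | Controlled ρ T ∧ Pseudolocal ρ T},
      ∀ b ∈ {T : H →L[ℂ] H | Controlled ρ T ∧ Pseudolocal ρ T ∧ SupportedNear ρ Y T},
      a * b ∈ {T : H →L[ℂ] H | Controlled ρ T ∧ Pseudolocal ρ T ∧ SupportedNear ρ Y T} :=
    fun a ha b hb => ⟨RoeAux.mul_controlled ρ hρ ha.1 hb.1,
      RoeAux.mul_pseudolocal ρ hρ ha.1 ha.2 hb.2.1,
      RoeAux.mul_supportedNear_left ρ hρ ha.1 hb.2.2⟩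
  have hg4 : ∀ a ∈ {T : H →L[ℂ] H | Controlled ρ T ∧ Pseudolocal ρ T},
      ∀ b ∈ {T : H →L[ℂ] H | Controlled ρ T ∧ Pseudolocal ρ T ∧ SupportedNear ρ Y T},
      b * a ∈ {T : H →L[ℂ] H | Controlled ρ T ∧ Pseudolocal ρ T ∧ SupportedNear ρ Y T} :=
    fun a ha b hb => ⟨RoeAux.mul_controlled ρ hρ hb.1 ha.1,
      RoeAux.mul_pseudolocal ρ hρ hb.1 hb.2.1 ha.2,
      RoeAux.mul_supportedNear_right ρ hρ ha.1 hb.2.2⟩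
  have key3 : ∀ T ∈ StructureAlgebra ρ, ∀ S ∈ RelRoeAlgebra ρ Y,
      T * S ∈ RelRoeAlgebra ρ Y ∧ S * T ∈ RelRoeAlgebra ρ Y := by
    intro T hT S hS
    exact ⟨map_mem_closure₂ continuous_mul hT hS hg1,
      map_mem_closure₂ continuous_mul hS hT (fun b hb a ha => hg2 a ha b hb)⟩
  have key6 : ∀ T ∈ StructureAlgebra ρ, ∀ S ∈ RelStructureAlgebra ρ Y,
      T * S ∈ RelStructureAlgebra ρ Y ∧ S * T ∈ RelStructureAlgebra ρ Y := by
    intro T hT S hS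
    exact ⟨map_mem_closure₂ continuous_mul hT hS hg3,
      map_mem_closure₂ continuous_mul hS hT (fun b hb a ha => hg4 a ha b hb)⟩
  have hsub2 : RelRoeAlgebra ρ Y ⊆ StructureAlgebra ρ :=
    closure_mono fun T hT => ⟨hT.1, RoeAux.locallyCompact_pseudolocal ρ hT.2.1⟩
  have hsub5 : RelStructureAlgebra ρ Y ⊆ StructureAlgebra ρ :=
    closure_mono fun T hT => ⟨hT.1, hT.2.1⟩
  have hsub7 : RelRoeAlgebra ρ Y ⊆ RoeAlgebra ρ :=
    closure_mono fun T hT => ⟨hT.1, hT.2.1⟩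
  have hsubRoe : RoeAlgebra ρ ⊆ StructureAlgebra ρ :=
    closure_mono fun T hT => ⟨hT.1, RoeAux.locallyCompact_pseudolocal ρ hT.2⟩
  have hsub9 : RelRoeAlgebra ρ Y ⊆ RelStructureAlgebra ρ Y :=
    closure_mono fun T hT => ⟨hT.1, RoeAux.locallyCompact_pseudolocal ρ hT.2.1, hT.2.2⟩
  exact ⟨isClosed_closure, hsub2, key3, isClosed_closure, hsub5, key6, hsub7,
    fun T hT S hS => key3 T (hsubRoe hT) S hS,
    hsub9, fun T hT S hS => key3 T (hsub5 hT) S hS⟩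
end

section
/- If T ∈ B(H) is locally compact with respect to ρ, then VTV* ∈ B(H') is locally compact with respect to ρ'; and if T is pseudolocal with respect to ρ, then VTV* is pseudolocal with respect to ρ'. -/
open Metric ZeroAtInfty

section Helpers

variable {E F G : Type*} [NormedAddCommGroup E] [NormedAddCommGroup F] [NormedAddCommGroup G]
  [NormedSpace ℂ E] [NormedSpace ℂ F] [NormedSpace ℂ G]

theorem IsCompactOperator.clm_comp' (A : F →L[ℂ] G) {B : E →L[ℂ] F}
    (h : IsCompactOperator ⇑B) : IsCompactOperator ⇑(A ∘L B) := by
  rw [ContinuousLinearMap.coe_comp']; exact h.clm_comp A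

theorem IsCompactOperator.comp_clm' {B : F →L[ℂ] G} (h : IsCompactOperator ⇑B)
    (A : E →L[ℂ] F) : IsCompactOperator ⇑(B ∘L A) := by
  rw [ContinuousLinearMap.coe_comp']; exact h.comp_clm A

theorem IsCompactOperator.add' {A B : E →L[ℂ] F} (hA : IsCompactOperator ⇑A)
    (hB : IsCompactOperator ⇑B) : IsCompactOperator ⇑(A + B) := by
  rw [ContinuousLinearMap.coe_add']; exact hA.add hB

end Helpers

section Schauder

variable {H : Type*} [NormedAddCommGroup H] [InnerProductSpace ℂ H] [CompleteSpace H]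
variable {H' : Type*} [NormedAddCommGroup H'] [InnerProductSpace ℂ H'] [CompleteSpace H']

/-- Schauder: the adjoint of a compact operator between Hilbert spaces is compact. -/
theorem IsCompactOperator.adjoint_clm {K : H →L[ℂ] H'}
    (hK : IsCompactOperator ⇑K) :
    IsCompactOperator ⇑(ContinuousLinearMap.adjoint K) := by
  set A := ContinuousLinearMap.adjoint K with hA
  suffices h : IsCompact (closure (⇑A '' closedBall (0 : H') 1)) by
    exact (isCompactOperator_iff_isCompact_closure_image_closedBall
      (A.toLinearMap : H' →ₗ[ℂ] H) zero_lt_one).mpr h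
  have hbdd : Bornology.IsBounded (⇑A '' closedBall (0 : H') 1) := by
    have : ⇑A '' closedBall (0 : H') 1 ⊆ closedBall (0 : H) ‖A‖ := by
      rintro - ⟨y, hy, rfl⟩
      rw [mem_closedBall, dist_zero_right]
      calc ‖A y‖ ≤ ‖A‖ * ‖y‖ := A.le_opNorm y
        _ ≤ ‖A‖ * 1 := by
            exact mul_le_mul_of_nonneg_left (by simpa [dist_zero_right] using hy) (norm_nonneg _)
        _ = ‖A‖ := mul_one _
    exact (isBounded_closedBall).subset this
  have hKA : IsCompact (closure (⇑K '' (⇑A '' closedBall (0 : H') 1))) :=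
    hK.isCompact_closure_image_of_bounded (f := (K : H →ₛₗ[RingHom.id ℂ] H')) hbdd
  apply IsSeqCompact.isCompact
  intro u hu
  have hchoice : ∀ n : ℕ, ∃ y ∈ closedBall (0 : H') 1, dist (u n) (A y) < 1 / (n + 1) := by
    intro n
    have hn : (0 : ℝ) < 1 / (n + 1) := by positivity
    obtain ⟨v, hv, hd⟩ := Metric.mem_closure_iff.mp (hu n) _ hn
    obtain ⟨y, hy, rfl⟩ := hv
    exact ⟨y, hy, hd⟩
  choose y hy hdy using hchoice
  have hmem : ∀ n, K (A (y n)) ∈ closure (⇑K '' (⇑A '' closedBall (0 : H') 1)) :=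
    fun n => subset_closure ⟨A (y n), ⟨y n, hy n, rfl⟩, rfl⟩
  obtain ⟨z, -, φ, hφ, hz⟩ := hKA.isSeqCompact hmem
  have hest : ∀ a b : ℕ, dist (A (y a)) (A (y b)) ^ 2 ≤ 2 * dist (K (A (y a))) (K (A (y b))) := by
    intro a b
    set w := y a - y b with hw
    have h1 : (‖A w‖ : ℝ) ^ 2 = ‖(inner ℂ w (K (A w)) : ℂ)‖ := by
      have : (inner ℂ (A w) (A w) : ℂ) = inner ℂ w (K (A w)) := by
        simpa [hA] using (ContinuousLinearMap.adjoint_inner_left K (A w) w)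
      rw [← this, inner_self_eq_norm_sq_to_K (𝕜 := ℂ)]
      simp [norm_pow]
    have h2 : ‖(inner ℂ w (K (A w)) : ℂ)‖ ≤ ‖w‖ * ‖K (A w)‖ := norm_inner_le_norm _ _
    have hwle : ‖w‖ ≤ 2 := by
      have ha := hy a; have hb := hy b
      rw [mem_closedBall, dist_zero_right] at ha hb
      calc ‖w‖ ≤ ‖y a‖ + ‖y b‖ := norm_sub_le _ _
        _ ≤ 1 + 1 := add_le_add ha hb
        _ = 2 := by norm_num
    have hmain : dist (A (y a)) (A (y b)) ^ 2 ≤ ‖w‖ * ‖K (A w)‖ := by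
      rw [dist_eq_norm, ← map_sub, ← hw]
      exact h1.le.trans h2
    refine hmain.trans ?_
    have hKw : ‖K (A w)‖ = dist (K (A (y a))) (K (A (y b))) := by
      rw [dist_eq_norm, ← map_sub, ← map_sub, hw]
    rw [hKw]
    exact mul_le_mul_of_nonneg_right hwle dist_nonneg
  have hcauchy : CauchySeq (fun n => A (y (φ n))) := by
    rw [Metric.cauchySeq_iff]
    intro ε hε
    have hKc : CauchySeq (fun n => K (A (y (φ n)))) := hz.cauchySeq
    rw [Metric.cauchySeq_iff] at hKc
    obtain ⟨N, hN⟩ := hKc (ε ^ 2 / 2) (by positivity)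
    refine ⟨N, fun m hm n hn => ?_⟩
    have h1 := hest (φ m) (φ n)
    have h2 := hN m hm n hn
    have hlt : dist (A (y (φ m))) (A (y (φ n))) ^ 2 < ε ^ 2 := by
      calc dist (A (y (φ m))) (A (y (φ n))) ^ 2
          ≤ 2 * dist (K (A (y (φ m)))) (K (A (y (φ n)))) := h1
        _ < 2 * (ε ^ 2 / 2) := by linarith
        _ = ε ^ 2 := by ring
    nlinarith [dist_nonneg (x := A (y (φ m))) (y := A (y (φ n))), hε]
  obtain ⟨L, hL⟩ := cauchySeq_tendsto_of_complete hcauchy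
  refine ⟨L, ?_, φ, hφ, ?_⟩
  · have hmem' : ∀ n, A (y (φ n)) ∈ ⇑A '' closedBall (0 : H') 1 :=
      fun n => ⟨y (φ n), hy (φ n), rfl⟩
    exact mem_closure_of_tendsto hL (Filter.Eventually.of_forall hmem')
  · have hdist : Filter.Tendsto (fun n => dist (u (φ n)) (A (y (φ n)))) Filter.atTop (nhds 0) := by
      have hle : ∀ n, dist (u (φ n)) (A (y (φ n))) ≤ 1 / (n + 1) := by
        intro n
        refine (hdy (φ n)).le.trans ?_
        have h : (n : ℝ) + 1 ≤ (φ n : ℝ) + 1 := by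
          have h := hφ.le_apply (x := n)
          exact_mod_cast add_le_add_left (Nat.cast_le.mpr h) 1
        exact one_div_le_one_div_of_le (by positivity) h
      exact squeeze_zero (fun n => dist_nonneg) hle tendsto_one_div_add_atTop_nhds_zero_nat
    rw [tendsto_iff_dist_tendsto_zero]
    have h2 : ∀ n, dist (u (φ n)) L ≤ dist (u (φ n)) (A (y (φ n))) + dist (A (y (φ n))) L :=
      fun n => dist_triangle _ _ _
    have h3 : Filter.Tendsto (fun n => dist (A (y (φ n))) L) Filter.atTop (nhds 0) := by
      rwa [← tendsto_iff_dist_tendsto_zero]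
    have h4 := hdist.add h3
    rw [add_zero] at h4
    exact squeeze_zero (fun n => dist_nonneg) h2 h4

end Schauder


variable {X : Type*} [MetricSpace X]
variable {H : Type*} [NormedAddCommGroup H] [InnerProductSpace ℂ H] [CompleteSpace H]

variable {X' : Type*} [MetricSpace X']
variable {H' : Type*} [NormedAddCommGroup H'] [InnerProductSpace ℂ H'] [CompleteSpace H']

/-- Conjugation `Ad_V : T ↦ V T V*` by a linear isometry `V : H → H'`. -/
noncomputable def AdV (V : H →ₗᵢ[ℂ] H') (T : H →L[ℂ] H) : H' →L[ℂ] H' :=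
  V.toContinuousLinearMap ∘L T ∘L ContinuousLinearMap.adjoint V.toContinuousLinearMap

/-- `V` coarsely covers `f` with propagation at most `ε`:
`ρ'(ψ) V ρ(φ) = 0` whenever `d(x', f(x)) > ε` for all `x' ∈ supp ψ`, `x ∈ supp φ`. -/
def CoarselyCovers (ρ : C₀(X, ℂ) →⋆ₙₐ[ℂ] (H →L[ℂ] H))
    (ρ' : C₀(X', ℂ) →⋆ₙₐ[ℂ] (H' →L[ℂ] H'))
    (V : H →ₗᵢ[ℂ] H') (f : X → X') (ε : ℝ) : Prop :=
  ∀ (φ : C₀(X, ℂ)) (ψ : C₀(X', ℂ)),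
    (∀ x' ∈ tsupport ⇑ψ, ∀ x ∈ tsupport ⇑φ, ε < dist x' (f x)) →
    ρ' ψ ∘L V.toContinuousLinearMap ∘L ρ φ = 0

/-- `V` topologically covers `f`: `ρ'(φ) V − V ρ(φ∘f)` is compact for every `φ ∈ C₀(X')`. -/
def TopologicallyCovers (ρ : C₀(X, ℂ) →⋆ₙₐ[ℂ] (H →L[ℂ] H))
    (ρ' : C₀(X', ℂ) →⋆ₙₐ[ℂ] (H' →L[ℂ] H'))
    (V : H →ₗᵢ[ℂ] H') (f : X → X') : Prop :=
  ∀ (φ : C₀(X', ℂ)) (ψ : C₀(X, ℂ)), ⇑ψ = ⇑φ ∘ f →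
    IsCompactOperator
      ⇑(ρ' φ ∘L V.toContinuousLinearMap - V.toContinuousLinearMap ∘L ρ ψ)

/-- conjugation by an isometry topologically covering a continuous
proper map preserves local compactness and pseudolocality. -/
theorem adV_locallyCompact_and_pseudolocal
    [ProperSpace X] [ProperSpace X']
    (ρ : C₀(X, ℂ) →⋆ₙₐ[ℂ] (H →L[ℂ] H)) (hρ : Nondegenerate ρ)
    (ρ' : C₀(X', ℂ) →⋆ₙₐ[ℂ] (H' →L[ℂ] H')) (hρ' : Nondegenerate ρ')
    (f : X → X') (hf : Continuous f)
    (hfproper : ∀ K : Set X', IsCompact K → IsCompact (f ⁻¹' K))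
    (V : H →ₗᵢ[ℂ] H') (hV : TopologicallyCovers ρ ρ' V f)
    (T : H →L[ℂ] H) :
    (LocallyCompact ρ T → LocallyCompact ρ' (AdV V T)) ∧
    (Pseudolocal ρ T → Pseudolocal ρ' (AdV V T)) := by
  have hco : Filter.Tendsto f (Filter.cocompact X) (Filter.cocompact X') := by
    rw [Filter.hasBasis_cocompact.tendsto_right_iff]
    intro K hK
    rw [Filter.hasBasis_cocompact.eventually_iff]
    exact ⟨f ⁻¹' K, hfproper K hK, fun x hx => hx⟩
  let F : CocompactMap X X' := ⟨⟨f, hf⟩, hco⟩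
  set Vc := V.toContinuousLinearMap with hVc
  set Vd := ContinuousLinearMap.adjoint Vc with hVd
  have key : ∀ φ' : C₀(X', ℂ),
      IsCompactOperator ⇑(ρ' φ' ∘L Vc - Vc ∘L ρ (φ'.comp F)) := fun φ' => hV φ' _ rfl
  have hstarcomp : ∀ φ' : C₀(X', ℂ),
      star (φ'.comp F) = (star φ').comp F := by
    intro φ'; ext x; simp
  have hadj : ∀ φ' : C₀(X', ℂ),
      ContinuousLinearMap.adjoint (ρ' (star φ') ∘L Vc - Vc ∘L ρ ((star φ').comp F))
        = Vd ∘L ρ' φ' - ρ (φ'.comp F) ∘L Vd := by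
    intro φ'
    rw [map_sub, ContinuousLinearMap.adjoint_comp, ContinuousLinearMap.adjoint_comp]
    rw [← hVd]
    congr 1
    · congr 1
      rw [← ContinuousLinearMap.star_eq_adjoint, ← map_star, star_star]
    · congr 1
      rw [← ContinuousLinearMap.star_eq_adjoint, ← map_star, ← hstarcomp, star_star]
  have key' : ∀ φ' : C₀(X', ℂ),
      IsCompactOperator ⇑(Vd ∘L ρ' φ' - ρ (φ'.comp F) ∘L Vd) := by
    intro φ'
    rw [← hadj]
    exact (key (star φ')).adjoint_clm
  have e1 : ∀ (φ' : C₀(X', ℂ)) (v : H),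
      ρ' φ' (Vc v) = Vc (ρ (φ'.comp F) v) + (ρ' φ' ∘L Vc - Vc ∘L ρ (φ'.comp F)) v := by
    intro φ' v; simp
  have e2 : ∀ (φ' : C₀(X', ℂ)) (w : H'),
      Vd (ρ' φ' w) = ρ (φ'.comp F) (Vd w) + (Vd ∘L ρ' φ' - ρ (φ'.comp F) ∘L Vd) w := by
    intro φ' w; simp
  have hAd : ∀ y : H', AdV V T y = Vc (T (Vd y)) := fun y => rfl
  constructor
  · -- local compactness
    intro hT φ'
    constructor
    · have d1 : ρ' φ' * AdV V T =
          Vc ∘L ((ρ (φ'.comp F) * T) ∘L Vd)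
            + (ρ' φ' ∘L Vc - Vc ∘L ρ (φ'.comp F)) ∘L (T ∘L Vd) := by
        ext x
        simp only [ContinuousLinearMap.mul_apply, ContinuousLinearMap.comp_apply,
          ContinuousLinearMap.add_apply, hAd]
        rw [e1]
      rw [d1]
      exact (((hT (φ'.comp F)).1.comp_clm' Vd).clm_comp' Vc).add'
        ((key φ').comp_clm' (T ∘L Vd))
    · have d2 : AdV V T * ρ' φ' =
          Vc ∘L ((T * ρ (φ'.comp F)) ∘L Vd)
            + (Vc ∘L T) ∘L (Vd ∘L ρ' φ' - ρ (φ'.comp F) ∘L Vd) := by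
        ext x
        simp only [ContinuousLinearMap.mul_apply, ContinuousLinearMap.comp_apply,
          ContinuousLinearMap.add_apply, hAd]
        rw [e2, map_add, map_add]
      rw [d2]
      exact (((hT (φ'.comp F)).2.comp_clm' Vd).clm_comp' Vc).add'
        ((key' φ').clm_comp' (Vc ∘L T))
  · -- pseudolocality
    intro hT φ' ψ' hmul
    have hmul' : (φ'.comp F) * (ψ'.comp F) = 0 := by
      ext x
      have h : (φ' * ψ') (f x) = 0 := by rw [hmul]; rfl
      simp at h ⊢; exact h
    have hmid := hT (φ'.comp F) (ψ'.comp F) hmul'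
    have d3 : ρ' φ' * AdV V T * ρ' ψ' =
        Vc ∘L ((ρ (φ'.comp F) * T * ρ (ψ'.comp F)) ∘L Vd)
          + (Vc ∘L (ρ (φ'.comp F) * T)) ∘L (Vd ∘L ρ' ψ' - ρ (ψ'.comp F) ∘L Vd)
          + (ρ' φ' ∘L Vc - Vc ∘L ρ (φ'.comp F)) ∘L ((T * ρ (ψ'.comp F)) ∘L Vd)
          + ((ρ' φ' ∘L Vc - Vc ∘L ρ (φ'.comp F)) ∘L T)
              ∘L (Vd ∘L ρ' ψ' - ρ (ψ'.comp F) ∘L Vd) := by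
      ext x
      simp only [ContinuousLinearMap.mul_apply, ContinuousLinearMap.comp_apply,
        ContinuousLinearMap.add_apply, hAd]
      rw [e2, map_add, map_add, map_add, e1, e1]
      abel
    rw [d3]
    exact ((((hmid.comp_clm' Vd).clm_comp' Vc).add'
        ((key' ψ').clm_comp' (Vc ∘L (ρ (φ'.comp F) * T)))).add'
        ((key φ').comp_clm' ((T * ρ (ψ'.comp F)) ∘L Vd))).add'
        ((key' ψ').clm_comp' ((ρ' φ' ∘L Vc - Vc ∘L ρ (φ'.comp F)) ∘L T))
end
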